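/- Theorem 4.2(i), MGF part: under the stated assumptions, θ e^{-θ y} M̃₁(θ) → f̂₀(y) / Ξ̂₁(0, y) as θ → ∞; that is, M̃₁(θ) ∼ θ^{-1} e^{θ y} f̂₀(y) / Ξ̂₁(0, y), where f̂₀(y) = (2π K₀''(t_y))^{-1/2} exp(K₀(t_y) − t_y y) is the saddlepoint density approximation at y. -/

import Mathlib

open MeasureTheory Set Filter

/-- The filter on ℝ describing approach to the (possibly infinite) left endpoint
`-α` of the convergence strip from the right: `s ↓ -α`. -/
noncomputable def towardsLowerEndpoint (α : EReal) : Filter ℝ :=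
  Filter.comap (fun s : ℝ => (s : EReal)) (nhdsWithin (-α) (Set.Ioi (-α)))

/-- The filter on ℝ describing approach to the (possibly infinite) right endpoint
`β` of the convergence strip from the left: `s ↑ β`. -/
noncomputable def towardsUpperEndpoint (β : EReal) : Filter ℝ :=
  Filter.comap (fun s : ℝ => (s : EReal)) (nhdsWithin β (Set.Iio β))

/-- The saddlepoint approximation (equation (26)) to the exponential convolution
integral: `Ξ̂₁(θ, y) = [2π(1 + (θ − s)² K₀''(s))]^{-1/2} exp(K₀(s) − (s − θ)y)`,
evaluated at the saddlepoint `s = s_{1,θ}`. -/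
noncomputable def XiHat (K₀ : ℝ → ℝ) (θ y s : ℝ) : ℝ :=
  (Real.sqrt (2 * Real.pi * (1 + (θ - s) ^ 2 * deriv (deriv K₀) s)))⁻¹ *
    Real.exp (K₀ s - (s - θ) * y)

/-- The saddlepoint density approximation
`f̂₀(y) = (2π K₀''(t_y))^{-1/2} exp(K₀(t_y) − t_y y)`. -/
noncomputable def fhatSP (K₀ : ℝ → ℝ) (y t : ℝ) : ℝ :=
  (Real.sqrt (2 * Real.pi * deriv (deriv K₀) t))⁻¹ * Real.exp (K₀ t - t * y)

/-- **Theorem 4.2(i), MGF part**: with `K₀` twice continuously differentiable,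
`K₀'' > 0` and steep on `(-α, β)`, `t_y` the saddlepoint for `y` and `s_{1,θ}`
the exponential-convolution saddlepoint, the approximation
`M̃₁(θ) = Ξ̂₁(θ, y)/Ξ̂₁(0, y)` satisfies
`θ e^{-θy} M̃₁(θ) → f̂₀(y)/Ξ̂₁(0, y)` as `θ → ∞`, i.e.
`M̃₁(θ) ∼ θ⁻¹ e^{θy} f̂₀(y)/Ξ̂₁(0, y)`. -/
theorem exp_convolution_mgf_right_tail
    (K₀ : ℝ → ℝ) (α β : EReal) (hα : 0 < α) (hβ : 0 < β)
    (hsmooth : ContDiffOn ℝ 2 K₀ {s : ℝ | -α < (s : EReal) ∧ (s : EReal) < β})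
    (hconv : ∀ s : ℝ, -α < (s : EReal) → (s : EReal) < β → 0 < deriv (deriv K₀) s)
    (hbot : Tendsto (deriv K₀) (towardsLowerEndpoint α) atBot)
    (htop : Tendsto (deriv K₀) (towardsUpperEndpoint β) atTop)
    (y t_y : ℝ) (hty₁ : -α < (t_y : EReal)) (hty₂ : (t_y : EReal) < β)
    (hty : deriv K₀ t_y = y)
    (s₁ : ℝ → ℝ)
    (hs₁ : ∀ θ : ℝ, -α < (θ : EReal) →
      (-α < (s₁ θ : EReal) ∧ (s₁ θ : EReal) < β ∧ s₁ θ < θ) ∧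
        deriv K₀ (s₁ θ) + (θ - s₁ θ)⁻¹ = y) :
    Tendsto (fun θ : ℝ => θ * Real.exp (-θ * y) * (XiHat K₀ θ y (s₁ θ) / XiHat K₀ 0 y (s₁ 0)))
      atTop (nhds (fhatSP K₀ y t_y / XiHat K₀ 0 y (s₁ 0))) := by
  set C := XiHat K₀ 0 y (s₁ 0) with hC
  set I : Set ℝ := {s : ℝ | -α < (s : EReal) ∧ (s : EReal) < β} with hIdef
  have hIopen : IsOpen I := by
    have h : I = (fun s : ℝ => (s : EReal)) ⁻¹' (Set.Ioo (-α) β) := rfl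
    rw [h]
    exact isOpen_Ioo.preimage continuous_coe_real_ereal
  have hIconv : Convex ℝ I := by
    apply Set.OrdConnected.convex
    constructor
    intro x hx y' hy' z hz
    exact ⟨lt_of_lt_of_le hx.1 (EReal.coe_le_coe_iff.2 hz.1),
      lt_of_le_of_lt (EReal.coe_le_coe_iff.2 hz.2) hy'.2⟩
  have hty_mem : t_y ∈ I := ⟨hty₁, hty₂⟩
  have hd1 : ContDiffOn ℝ 1 (deriv K₀) I := by
    exact hsmooth.deriv_of_isOpen hIopen (by norm_num)
  have hK'cont : ContinuousOn (deriv K₀) I := hd1.continuousOn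
  have hK''cont : ContinuousOn (deriv (deriv K₀)) I := by
    exact hd1.continuousOn_deriv_of_isOpen hIopen le_rfl
  have hmono : StrictMonoOn (deriv K₀) I := by
    apply strictMonoOn_of_deriv_pos hIconv hK'cont
    rw [hIopen.interior_eq]
    exact fun x hx => hconv x hx.1 hx.2
  have hnegα : -α < (0 : EReal) := by
    have h0 : -α < -0 := EReal.neg_lt_neg_iff.2 hα
    simpa using h0
  have hprop : ∀ θ : ℝ, 0 < θ →
      (s₁ θ ∈ I ∧ s₁ θ < θ ∧ deriv K₀ (s₁ θ) + (θ - s₁ θ)⁻¹ = y) := by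
    intro θ hθ
    have hθ' : -α < (θ : EReal) := lt_trans hnegα (by exact_mod_cast hθ)
    obtain ⟨⟨h1, h2, h3⟩, h4⟩ := hs₁ θ hθ'
    exact ⟨⟨h1, h2⟩, h3, h4⟩
  have hslt : ∀ θ : ℝ, 0 < θ → s₁ θ < t_y := by
    intro θ hθ
    obtain ⟨hmem, hlt, heq⟩ := hprop θ hθ
    have hpos : 0 < (θ - s₁ θ)⁻¹ := inv_pos.2 (by linarith)
    have h : deriv K₀ (s₁ θ) < deriv K₀ t_y := by rw [hty]; linarith
    exact (hmono.lt_iff_lt hmem hty_mem).1 h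
  have hs_tendsto : Tendsto s₁ atTop (nhds t_y) := by
    refine tendsto_order.2 ⟨?_, ?_⟩
    · intro c hc
      obtain ⟨x, hx1, hx2⟩ := EReal.lt_iff_exists_real_btwn.1 hty₁
      have hx2' : x < t_y := by exact_mod_cast hx2
      have hc'mem : max c x ∈ I :=
        ⟨lt_of_lt_of_le hx1 (by exact_mod_cast le_max_right c x),
          lt_trans (by exact_mod_cast (max_lt hc hx2')) hty₂⟩
      have hc'lt : max c x < t_y := max_lt hc hx2'
      have hKc : deriv K₀ (max c x) < y := by
        rw [← hty]; exact hmono hc'mem hty_mem hc'lt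
      have hm0 : 0 < y - deriv K₀ (max c x) := by linarith
      filter_upwards [eventually_gt_atTop (max 0 (t_y + (y - deriv K₀ (max c x))⁻¹))]
        with θ hθ
      have hθ0 : 0 < θ := lt_of_le_of_lt (le_max_left _ _) hθ
      obtain ⟨hmem, hlt, heq⟩ := hprop θ hθ0
      have h1 : t_y + (y - deriv K₀ (max c x))⁻¹ < θ := lt_of_le_of_lt (le_max_right _ _) hθ
      have h2 : (y - deriv K₀ (max c x))⁻¹ < θ - s₁ θ := by
        have := hslt θ hθ0; linarith
      have h3 : (θ - s₁ θ)⁻¹ < y - deriv K₀ (max c x) := by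
        have h4 := inv_strictAnti₀ (inv_pos.2 hm0) h2
        rwa [inv_inv] at h4
      have h5 : deriv K₀ (max c x) < deriv K₀ (s₁ θ) := by linarith
      have h6 := (hmono.lt_iff_lt hc'mem hmem).1 h5
      exact lt_of_le_of_lt (le_max_left c x) h6
    · intro c hc
      filter_upwards [eventually_gt_atTop 0] with θ hθ
      exact lt_trans (hslt θ hθ) hc
  have hKat : ContinuousAt K₀ t_y :=
    hsmooth.continuousOn.continuousAt (hIopen.mem_nhds hty_mem)
  have hK''at : ContinuousAt (deriv (deriv K₀)) t_y :=
    hK''cont.continuousAt (hIopen.mem_nhds hty_mem)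
  have hKlim : Tendsto (fun θ => K₀ (s₁ θ)) atTop (nhds (K₀ t_y)) :=
    hKat.tendsto.comp hs_tendsto
  have hK''lim : Tendsto (fun θ => deriv (deriv K₀) (s₁ θ)) atTop
      (nhds (deriv (deriv K₀) t_y)) := hK''at.tendsto.comp hs_tendsto
  have hdiv : Tendsto (fun θ => s₁ θ / θ) atTop (nhds 0) :=
    hs_tendsto.div_atTop tendsto_id
  have hratio : Tendsto (fun θ => (θ - s₁ θ) / θ) atTop (nhds 1) := by
    have h := (tendsto_const_nhds (x := (1 : ℝ))).sub hdiv
    rw [sub_zero] at h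
    refine Tendsto.congr' ?_ h
    filter_upwards [eventually_gt_atTop 0] with θ hθ
    field_simp
  have hinner : Tendsto
      (fun θ => 2 * Real.pi * ((θ ^ 2)⁻¹ + ((θ - s₁ θ) / θ) ^ 2 * deriv (deriv K₀) (s₁ θ)))
      atTop (nhds (2 * Real.pi * deriv (deriv K₀) t_y)) := by
    have h1 : Tendsto (fun θ : ℝ => (θ ^ 2)⁻¹) atTop (nhds 0) := by
      have := tendsto_inv_atTop_zero.comp (tendsto_pow_atTop (α := ℝ) (n := 2) (by norm_num))
      exact this
    have h2 := (hratio.pow 2).mul hK''lim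
    have h3 := (tendsto_const_nhds (x := (2 : ℝ) * Real.pi)).mul (h1.add h2)
    convert h3 using 2
    ring
  have hKty : 0 < deriv (deriv K₀) t_y := hconv t_y hty₁ hty₂
  have hsqrt := (Real.continuous_sqrt.tendsto _).comp hinner
  have hsqrt0 : Real.sqrt (2 * Real.pi * deriv (deriv K₀) t_y) ≠ 0 :=
    ne_of_gt (Real.sqrt_pos.2 (by positivity))
  have hinv := hsqrt.inv₀ hsqrt0
  have hexp : Tendsto (fun θ => Real.exp (K₀ (s₁ θ) - s₁ θ * y)) atTop
      (nhds (Real.exp (K₀ t_y - t_y * y))) :=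
    (Real.continuous_exp.tendsto _).comp (hKlim.sub (hs_tendsto.mul_const y))
  have hmain := (hinv.mul hexp).div_const C
  refine Tendsto.congr' ?_ hmain
  filter_upwards [eventually_gt_atTop 0] with θ hθ
  obtain ⟨hmem, hlt, heq⟩ := hprop θ hθ
  have hK''pos : 0 < deriv (deriv K₀) (s₁ θ) := hconv _ hmem.1 hmem.2
  simp only [Function.comp, XiHat]
  have hx0 : 0 ≤ 2 * Real.pi * (1 + (θ - s₁ θ) ^ 2 * deriv (deriv K₀) (s₁ θ)) := by
    have hq : 0 ≤ (θ - s₁ θ) ^ 2 * deriv (deriv K₀) (s₁ θ) :=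
      mul_nonneg (sq_nonneg _) hK''pos.le
    nlinarith [Real.pi_pos]
  have harg : 2 * Real.pi * ((θ ^ 2)⁻¹ + ((θ - s₁ θ) / θ) ^ 2 * deriv (deriv K₀) (s₁ θ)) =
      2 * Real.pi * (1 + (θ - s₁ θ) ^ 2 * deriv (deriv K₀) (s₁ θ)) / θ ^ 2 := by
    field_simp
  have hsq : Real.sqrt (2 * Real.pi * (1 + (θ - s₁ θ) ^ 2 * deriv (deriv K₀) (s₁ θ)) / θ ^ 2) =
      Real.sqrt (2 * Real.pi * (1 + (θ - s₁ θ) ^ 2 * deriv (deriv K₀) (s₁ θ))) / θ := by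
    rw [Real.sqrt_div hx0, Real.sqrt_sq hθ.le]
  have hexp_eq : Real.exp (-θ * y) * Real.exp (K₀ (s₁ θ) - (s₁ θ - θ) * y) =
      Real.exp (K₀ (s₁ θ) - s₁ θ * y) := by
    rw [← Real.exp_add]
    ring_nf
  rw [harg, hsq, inv_div, ← hexp_eq]
  ring
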